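/- The 4×4 upper triangular matrix R̄ with 1's on the diagonal and entries R̄₁₂ = h+g, R̄₁₃ = −h−g, R̄₁₄ = h²−g², R̄₂₄ = h−g, R̄₃₄ = −h+g (all other off-diagonal entries zero) satisfies the quantum Yang–Baxter equation R̄₁₂ R̄₁₃ R̄₂₃ = R̄₂₃ R̄₁₃ R̄₁₂ on (k²)⊗³ ≅ k⁸, for all scalars h, g in a commutative ring. -/

import Mathlib

open Matrix
open Fin.NatCast

/-- R̄ with 1's on the diagonal and entries (1,2)=h+g, (1,3)=−h−g, (1,4)=h²−g²,
(2,4)=h−g, (3,4)=−h+g, regarded as an operator on k²⊗k² via the identification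
e₁=(0,0), e₂=(0,1), e₃=(1,0), e₄=(1,1). -/
def Rbar {k : Type*} [CommRing k] (h g : k) :
    Matrix (Fin 2 × Fin 2) (Fin 2 × Fin 2) k :=
  fun p q =>
    (!![1, h+g, -h-g, h^2-g^2;
        0, 1,   0,    h-g;
        0, 0,   1,    -h+g;
        0, 0,   0,    1] : Matrix (Fin 4) (Fin 4) k)
      (2 * p.1 + p.2 : Fin 4) (2 * q.1 + q.2 : Fin 4)

/-- A₁₂ = A⊗I₂ acting on the first two tensor factors of (k²)⊗³. -/
def leg12 {k : Type*} [CommRing k] (A : Matrix (Fin 2 × Fin 2) (Fin 2 × Fin 2) k) :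
    Matrix (Fin 2 × Fin 2 × Fin 2) (Fin 2 × Fin 2 × Fin 2) k :=
  fun p q => if p.2.2 = q.2.2 then A (p.1, p.2.1) (q.1, q.2.1) else 0

/-- A₂₃ = I₂⊗A acting on the last two tensor factors of (k²)⊗³. -/
def leg23 {k : Type*} [CommRing k] (A : Matrix (Fin 2 × Fin 2) (Fin 2 × Fin 2) k) :
    Matrix (Fin 2 × Fin 2 × Fin 2) (Fin 2 × Fin 2 × Fin 2) k :=
  fun p q => if p.1 = q.1 then A p.2 q.2 else 0

/-- A₁₃ acting on the first and third tensor factors of (k²)⊗³. -/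
def leg13 {k : Type*} [CommRing k] (A : Matrix (Fin 2 × Fin 2) (Fin 2 × Fin 2) k) :
    Matrix (Fin 2 × Fin 2 × Fin 2) (Fin 2 × Fin 2 × Fin 2) k :=
  fun p q => if p.2.1 = q.2.1 then A (p.1, p.2.2) (q.1, q.2.2) else 0

set_option maxHeartbeats 4000000 in
/-- R̄ satisfies the quantum Yang–Baxter equation R̄₁₂ R̄₁₃ R̄₂₃ = R̄₂₃ R̄₁₃ R̄₁₂
on (k²)⊗³ ≅ k⁸, for all scalars h, g in a commutative ring. -/
theorem Rbar_QYBE (k : Type*) [CommRing k] (h g : k) :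
    leg12 (Rbar h g) * leg13 (Rbar h g) * leg23 (Rbar h g) =
      leg23 (Rbar h g) * leg13 (Rbar h g) * leg12 (Rbar h g) := by
  have hR : Rbar h g = fun p q =>
      ![![![![1,h+g],![-h-g,h^2-g^2]], ![![0,1],![0,h-g]]],
        ![![![0,0],![1,-h+g]], ![![0,0],![0,1]]]] p.1 p.2 q.1 q.2 := by
    ext ⟨a,b⟩ ⟨c,d⟩
    fin_cases a <;> fin_cases b <;> fin_cases c <;> fin_cases d <;> norm_num [Rbar] <;>
      simp [Matrix.vecHead, Matrix.vecTail]
  rw [hR]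
  ext ⟨a, b, c⟩ ⟨d, e, f⟩
  fin_cases a <;> fin_cases b <;> fin_cases c <;> fin_cases d <;> fin_cases e <;> fin_cases f <;>
    simp [mul_apply, leg12, leg13, leg23, Fintype.sum_prod_type, Fin.sum_univ_two] <;> ring
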